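/- Let 0 < ε < 1, x ∈ (0,1), δ = (1+ε)/(1−ε), and let N be determined by δ^N being approximately (2−ε)/(1+x(1−ε)). With xⱼ = δʲ(1/(1−ε)+x) − 1/(1−ε), the sum ∑_{j=0}^{N} 2ε/(1 − δʲ(1+x)) converges as ε → 0 to ∫₁^{2/(1+x)} dy/(y(1 − y(x+1))) = log(2x/(x+1)). Consequently, ∏_{j=0}^{N} xⱼ/(xⱼ + 2ε) → 2x/(x+1) as ε → 0. -/

import Mathlib

open Filter

section RSLAux
open Finset

lemma rsl_integral_eval (x : ℝ) (hx0 : 0 < x) (hx1 : x < 1) :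
    ∫ y in (1:ℝ)..(2 / (1 + x)), 1 / (y * (1 - y * (x + 1))) =
      Real.log (2 * x / (x + 1)) := by
  have hx1p : (0:ℝ) < 1 + x := by linarith
  have hb1 : (1:ℝ) < 2 / (1 + x) := by
    rw [lt_div_iff₀ hx1p]; linarith
  have hIcc : Set.uIcc (1:ℝ) (2/(1+x)) = Set.Icc 1 (2/(1+x)) :=
    Set.uIcc_of_le hb1.le
  set F : ℝ → ℝ := fun y => Real.log y - Real.log ((x+1)*y - 1) with hF
  have hder : ∀ y ∈ Set.uIcc (1:ℝ) (2/(1+x)),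
      HasDerivAt F (1/(y*(1 - y*(x+1)))) y := by
    intro y hy
    rw [hIcc] at hy
    obtain ⟨hy1, hy2⟩ := hy
    have hy0 : (0:ℝ) < y := by linarith
    have hd : 0 < (x+1)*y - 1 := by nlinarith
    have h1 : HasDerivAt Real.log y⁻¹ y := Real.hasDerivAt_log hy0.ne'
    have h2 : HasDerivAt (fun y : ℝ => (x+1)*y - 1) (x+1) y := by
      simpa using ((hasDerivAt_id y).const_mul (x+1)).sub_const 1
    have h3 : HasDerivAt (fun y : ℝ => Real.log ((x+1)*y - 1))
        (((x+1)*y - 1)⁻¹ * (x+1)) y :=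
      by have := (Real.hasDerivAt_log hd.ne').comp y h2; exact this
    have h4 := h1.sub h3
    refine h4.congr_deriv ?_
    have hne : 1 - y*(x+1) ≠ 0 := by nlinarith
    have e : (x+1)*y - 1 = -(1 - y*(x+1)) := by ring
    rw [e]
    field_simp
    ring
  have hcont : IntervalIntegrable (fun y : ℝ => 1/(y*(1 - y*(x+1))))
      MeasureTheory.volume 1 (2/(1+x)) := by
    apply ContinuousOn.intervalIntegrable
    apply ContinuousOn.div continuousOn_const
    · fun_prop
    · intro y hy
      rw [hIcc] at hy
      obtain ⟨hy1, hy2⟩ := hy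
      have hy0 : (0:ℝ) < y := by linarith
      have hd : 1 - y*(x+1) < 0 := by nlinarith
      exact mul_ne_zero hy0.ne' hd.ne
  rw [intervalIntegral.integral_eq_sub_of_hasDerivAt hder hcont]
  have e1 : (x+1)*(2/(1+x)) - 1 = 1 := by field_simp; ring
  simp only [hF, e1, Real.log_one, mul_one]
  rw [sub_zero, zero_sub, sub_neg_eq_add]
  have e2 : x + 1 - 1 = x := by ring
  rw [e2, ← Real.log_mul (by positivity) hx0.ne']
  congr 1
  field_simp
  ring

lemma rsl_log_bounds {u : ℝ} (hu : 0 ≤ u) : u - u^2 ≤ Real.log (1+u) ∧ Real.log (1+u) ≤ u := by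
  have h1 : (0:ℝ) < 1 + u := by linarith
  constructor
  · have h2 := Real.log_le_sub_one_of_pos (show (0:ℝ) < (1+u)⁻¹ by positivity)
    rw [Real.log_inv] at h2
    have h3 : (1+u)⁻¹ - 1 = -(u/(1+u)) := by field_simp; ring
    rw [h3] at h2
    have h4 : u/(1+u) ≤ Real.log (1+u) := by linarith
    have h5 : u - u^2 ≤ u/(1+u) := by
      rw [le_div_iff₀ h1]; nlinarith
    linarith
  · have := Real.log_le_sub_one_of_pos h1
    linarith

set_option maxHeartbeats 1000000 in
lemma rsl_key (x ε : ℝ) (hx0 : 0 < x) (hx1 : x < 1) (hε0 : 0 < ε)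
    (hε1 : ε ≤ 1/4) (hεx : ε ≤ x/4) (n : ℕ)
    (hn1 : ((1 + ε) / (1 - ε)) ^ n < (2 - ε) / (1 + x * (1 - ε))) :
    (((1 + ε) / (1 - ε)) ^ (n+1) * x /
        (((1 + ε) / (1 - ε)) ^ (n+1) * (1 / (1 - ε) + x) - 1 / (1 - ε)) ≤
      ∏ j ∈ Finset.range (n + 1),
          (((1 + ε) / (1 - ε)) ^ j * (1 / (1 - ε) + x) - 1 / (1 - ε)) /
            ((((1 + ε) / (1 - ε)) ^ j * (1 / (1 - ε) + x) - 1 / (1 - ε)) + 2 * ε)) ∧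
    ((∏ j ∈ Finset.range (n + 1),
          (((1 + ε) / (1 - ε)) ^ j * (1 / (1 - ε) + x) - 1 / (1 - ε)) /
            ((((1 + ε) / (1 - ε)) ^ j * (1 / (1 - ε) + x) - 1 / (1 - ε)) + 2 * ε)) ≤
      ((1 + ε) / (1 - ε)) ^ (n+1) * x /
        (((1 + ε) / (1 - ε)) ^ (n+1) * (1 / (1 - ε) + x) - 1 / (1 - ε)) *
        Real.exp (4 * ε)) ∧
    |(∑ j ∈ Finset.range (n + 1), 2 * ε / (1 - ((1 + ε) / (1 - ε)) ^ j * (1 + x))) -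
      Real.log (∏ j ∈ Finset.range (n + 1),
          (((1 + ε) / (1 - ε)) ^ j * (1 / (1 - ε) + x) - 1 / (1 - ε)) /
            ((((1 + ε) / (1 - ε)) ^ j * (1 / (1 - ε) + x) - 1 / (1 - ε)) + 2 * ε))| ≤
      12 * ε / x ^ 2 := by
  have h1e : (0:ℝ) < 1 - ε := by linarith
  obtain ⟨δ, hδdef⟩ : ∃ δ : ℝ, δ = (1 + ε) / (1 - ε) := ⟨_, rfl⟩
  obtain ⟨a, hadef⟩ : ∃ a : ℝ, a = 1 / (1 - ε) := ⟨_, rfl⟩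
  obtain ⟨X, hXdef⟩ : ∃ X : ℕ → ℝ, X = fun j => δ ^ j * (a + x) - a := ⟨_, rfl⟩
  rw [← hδdef] at hn1 ⊢
  rw [← hadef]
  have hXfold : ∀ j : ℕ, δ^j * (a + x) - a = X j := by intro j; rw [hXdef]
  simp only [hXfold]
  have hδ1 : 1 < δ := by rw [hδdef, lt_div_iff₀ h1e]; linarith
  have hδ0 : 0 < δ := by linarith
  have hδ2 : δ ≤ 2 := by rw [hδdef, div_le_iff₀ h1e]; linarith
  have ha1 : 1 ≤ a := by rw [hadef, le_div_iff₀ h1e]; linarith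
  have ha2 : a ≤ 2 := by rw [hadef, div_le_iff₀ h1e]; linarith
  have hX0 : X 0 = x := by rw [hXdef]; simp
  have hpow1 : ∀ j, (1:ℝ) ≤ δ ^ j := fun j => one_le_pow₀ hδ1.le
  have hXge : ∀ j, x ≤ X j := by
    intro j
    have h := hpow1 j
    simp only [hXdef]
    nlinarith
  have hXpos : ∀ j, 0 < X j := fun j => lt_of_lt_of_le hx0 (hXge j)
  have hX2pos : ∀ j, 0 < X j + 2*ε := fun j => by have := hXpos j; linarith
  have hfpos : ∀ j, 0 < X j / (X j + 2*ε) := fun j => div_pos (hXpos j) (hX2pos j)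
  have hXid : ∀ j, X (j+1) = δ * (X j + 2*ε) + 2*ε^3/(1-ε)^2 := by
    intro j
    simp only [hXdef, hadef, hδdef, pow_succ]
    field_simp
    ring
  have hη1 : 0 ≤ 2*ε^3/(1-ε)^2 := by positivity
  have hη2 : 2*ε^3/(1-ε)^2 ≤ x*ε^2 := by
    rw [div_le_iff₀ (by positivity)]
    have h1 : 2*ε^3 ≤ 4*ε^3*(1-ε)^2 := by
      nlinarith [mul_nonneg (pow_pos hε0 3).le (show (0:ℝ) ≤ 2-8*ε+4*ε^2 by nlinarith)]
    have h2 : 4*ε*(ε^2*(1-ε)^2) ≤ x*(ε^2*(1-ε)^2) :=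
      mul_le_mul_of_nonneg_right (by linarith) (by positivity)
    nlinarith
  have hstep : ∀ j, X j / (X j + 2*ε) = δ * X j / (X (j+1) - 2*ε^3/(1-ε)^2) := by
    intro j
    have h : X (j+1) - 2*ε^3/(1-ε)^2 = δ * (X j + 2*ε) := by rw [hXid]; ring
    rw [h, mul_div_mul_left _ _ (ne_of_gt hδ0)]
  have hdenpos : ∀ j, 0 < X (j+1) - 2*ε^3/(1-ε)^2 := by
    intro j
    have h16 : ε^2 ≤ (1:ℝ)/16 := by nlinarith
    nlinarith [hXge (j+1), hη2, mul_le_mul_of_nonneg_left h16 hx0.le]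
  have hfLB : ∀ j, δ * X j / X (j+1) ≤ X j / (X j + 2*ε) := by
    intro j
    rw [hstep j]
    exact div_le_div_of_nonneg_left (mul_pos hδ0 (hXpos j)).le (hdenpos j)
      (by linarith [hη1])
  have hfUB : ∀ j, X j / (X j + 2*ε) ≤ δ * X j / X (j+1) * (1 + 4*ε^2) := by
    intro j
    rw [hstep j]
    have hX1 := hXpos (j+1)
    have hnum : 0 ≤ δ * X j := (mul_pos hδ0 (hXpos j)).le
    have hbr : 0 ≤ 4*ε^2 * X (j+1) - 2*ε^3/(1-ε)^2 * (1+4*ε^2) := by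
      have hA : 4*ε^2*x ≤ 4*ε^2*X (j+1) :=
        mul_le_mul_of_nonneg_left (hXge (j+1)) (by positivity)
      have hB : 2*ε^3/(1-ε)^2*(1+4*ε^2) ≤ x*ε^2*(1+4*ε^2) :=
        mul_le_mul_of_nonneg_right hη2 (by positivity)
      have hC : x*ε^2*(1+4*ε^2) ≤ x*ε^2*2 :=
        mul_le_mul_of_nonneg_left (show (1:ℝ)+4*ε^2 ≤ 2 by nlinarith) (by positivity)
      nlinarith [mul_nonneg hx0.le (sq_nonneg ε)]
    have h2 : δ * X j / (X (j+1) - 2*ε^3/(1-ε)^2) ≤ δ * X j * (1+4*ε^2) / X (j+1) := by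
      rw [div_le_div_iff₀ (hdenpos j) hX1]
      nlinarith [mul_nonneg hnum hbr]
    calc δ * X j / (X (j+1) - 2*ε^3/(1-ε)^2) ≤ δ * X j * (1+4*ε^2) / X (j+1) := h2
      _ = δ * X j / X (j+1) * (1+4*ε^2) := by ring
  have hprodBnd : ∀ m : ℕ, δ^m * x / X m ≤ (∏ j ∈ range m, X j / (X j + 2*ε)) ∧
      (∏ j ∈ range m, X j / (X j + 2*ε)) ≤ δ^m * x / X m * (1+4*ε^2)^m := by
    intro m
    induction m with
    | zero => norm_num [hX0, div_self hx0.ne']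
    | succ m ih =>
      obtain ⟨ih1, ih2⟩ := ih
      have hXm := hXpos m
      have hXm1 := hXpos (m+1)
      have hprodpos : 0 < ∏ j ∈ range m, X j / (X j + 2*ε) :=
        prod_pos (fun j _ => hfpos j)
      have e1 : δ^(m+1) * x / X (m+1) = (δ^m * x / X m) * (δ * X m / X (m+1)) := by
        field_simp
        ring
      constructor
      · rw [prod_range_succ, e1]
        exact mul_le_mul ih1 (hfLB m)
          (div_nonneg (mul_pos hδ0 hXm).le hXm1.le) hprodpos.le
      · rw [prod_range_succ]
        calc (∏ j ∈ range m, X j / (X j + 2*ε)) * (X m / (X m + 2*ε))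
            ≤ (δ^m * x / X m * (1+4*ε^2)^m) * (δ * X m / X (m+1) * (1+4*ε^2)) :=
              mul_le_mul ih2 (hfUB m) (hfpos m).le
                (by positivity)
          _ = δ^(m+1) * x / X (m+1) * (1+4*ε^2)^(m+1) := by
              field_simp
              ring
  have hδn2 : δ^n < 2 := by
    have hden1 : (1:ℝ) ≤ 1 + x*(1-ε) := by nlinarith
    have h2 := div_le_self (show (0:ℝ) ≤ 2-ε by linarith) hden1
    linarith
  have hNε : ((n:ℝ)+1) * ε ≤ 1 := by
    have hb : (1:ℝ) + n*(2*ε) ≤ (1+2*ε)^n := one_add_mul_le_pow (by linarith) n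
    have hmono : (1+2*ε)^n ≤ δ^n := by
      apply pow_le_pow_left₀ (by linarith)
      rw [hδdef, le_div_iff₀ h1e]
      nlinarith
    nlinarith
  have hδj2 : ∀ j, j ≤ n → δ^j < 2 := fun j hj =>
    lt_of_le_of_lt (pow_le_pow_right₀ hδ1.le hj) hδn2
  have hTnonneg : 0 ≤ δ^(n+1) * x / X (n+1) :=
    div_nonneg (mul_nonneg (pow_pos hδ0 _).le hx0.le) (hXpos (n+1)).le
  refine ⟨(hprodBnd (n+1)).1, ?_, ?_⟩
  · have hpow4 : (1+4*ε^2)^(n+1) ≤ Real.exp (4*ε) := by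
      have h1 : (1+4*ε^2) ≤ Real.exp (4*ε^2) := by
        have := Real.add_one_le_exp (4*ε^2); linarith
      have h2 : (1+4*ε^2)^(n+1) ≤ Real.exp (4*ε^2)^(n+1) :=
        pow_le_pow_left₀ (by positivity) h1 _
      rw [← Real.exp_nat_mul] at h2
      refine le_trans h2 (Real.exp_le_exp.mpr ?_)
      push_cast
      nlinarith
    calc (∏ j ∈ range (n+1), X j / (X j + 2*ε))
        ≤ δ^(n+1) * x / X (n+1) * (1+4*ε^2)^(n+1) := (hprodBnd (n+1)).2
      _ ≤ δ^(n+1) * x / X (n+1) * Real.exp (4*ε) :=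
          mul_le_mul_of_nonneg_left hpow4 hTnonneg
  · have hfne : ∀ j ∈ range (n+1), X j / (X j + 2*ε) ≠ 0 := fun j _ => (hfpos j).ne'
    rw [Real.log_prod hfne, ← Finset.sum_sub_distrib]
    refine le_trans (Finset.abs_sum_le_sum_abs _ _) ?_
    have hterm : ∀ j ∈ range (n+1),
        |2*ε/(1 - δ^j*(1+x)) - Real.log (X j/(X j + 2*ε))| ≤ 12*ε^2/x^2 := by
      intro j hj
      rw [mem_range, Nat.lt_succ_iff] at hj
      have hXj := hXpos j
      have hXgej := hXge j
      have hu0 : 0 ≤ 2*ε/X j := by positivity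
      have hlf : Real.log (X j/(X j + 2*ε)) = -Real.log (1 + 2*ε/X j) := by
        rw [← Real.log_inv]
        congr 1
        field_simp
      have hlog := rsl_log_bounds hu0
      have hu_le : 2*ε/X j ≤ 2*ε/x :=
        div_le_div_of_nonneg_left (by positivity) hx0 hXgej
      have hu2 : (2*ε/X j)^2 ≤ 4*ε^2/x^2 := by
        have e : (2*ε/x)^2 = 4*ε^2/x^2 := by
          rw [div_pow]; ring_nf
        calc (2*ε/X j)^2 ≤ (2*ε/x)^2 := pow_le_pow_left₀ hu0 hu_le 2
          _ = 4*ε^2/x^2 := e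
      have hXj_eq : X j = δ^j * (a + x) - a := by rw [hXdef]
      have hdj : 1 - δ^j*(1+x) = -((1-ε)*X j + ε*δ^j*x) := by
        rw [hXj_eq, hadef, hδdef]
        field_simp
        ring
      have hdpos : x/2 ≤ (1-ε)*X j + ε*δ^j*x := by
        nlinarith [pow_pos hδ0 j, mul_pos hε0 (mul_pos (pow_pos hδ0 j) hx0)]
      have hdpos0 : 0 < (1-ε)*X j + ε*δ^j*x := lt_of_lt_of_le (by positivity) hdpos
      have hterm1 : 2*ε/(1 - δ^j*(1+x)) = -(2*ε/((1-ε)*X j + ε*δ^j*x)) := by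
        rw [hdj, div_neg]
      have hdiff : ((1-ε)*X j + ε*δ^j*x) - X j = ε * a * (1 - δ^j) := by
        rw [hXj_eq]
        ring
      have habs : |((1-ε)*X j + ε*δ^j*x) - X j| ≤ 2*ε := by
        rw [hdiff, abs_mul, abs_mul, abs_of_pos hε0, abs_of_pos (by linarith : (0:ℝ) < a)]
        have h1 : |1 - δ^j| ≤ 1 := by
          rw [abs_le]
          constructor <;> nlinarith [hpow1 j, hδj2 j hj]
        have h2 : ε*a*|1-δ^j| ≤ ε*a*1 :=
          mul_le_mul_of_nonneg_left h1 (mul_nonneg hε0.le (by linarith))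
        have h3 : ε*a ≤ ε*2 := mul_le_mul_of_nonneg_left ha2 hε0.le
        linarith
      have hfrac : |2*ε/X j - 2*ε/((1-ε)*X j + ε*δ^j*x)| ≤ 8*ε^2/x^2 := by
        rw [div_sub_div _ _ hXj.ne' hdpos0.ne', abs_div]
        have hnum : |2*ε*((1-ε)*X j + ε*δ^j*x) - X j*(2*ε)| ≤ 4*ε^2 := by
          have e : 2*ε*((1-ε)*X j + ε*δ^j*x) - X j*(2*ε)
              = 2*ε*((((1-ε)*X j + ε*δ^j*x)) - X j) := by ring
          rw [e, abs_mul, abs_of_pos (by positivity : (0:ℝ) < 2*ε)]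
          have h4 := mul_le_mul_of_nonneg_left habs (show (0:ℝ) ≤ 2*ε by positivity)
          nlinarith [h4]
        have hden : x^2/2 ≤ |X j * ((1-ε)*X j + ε*δ^j*x)| := by
          rw [abs_of_pos (mul_pos hXj hdpos0)]
          nlinarith [hXgej, hdpos, hx0]
        calc |2*ε*((1-ε)*X j + ε*δ^j*x) - X j*(2*ε)| / |X j * ((1-ε)*X j + ε*δ^j*x)|
            ≤ (4*ε^2) / (x^2/2) :=
              div_le_div₀ (by positivity) hnum (by positivity) hden
          _ = 8*ε^2/x^2 := by
              rw [div_div_eq_mul_div]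
              ring
      rw [hterm1, hlf]
      have e2 : -(2*ε/((1-ε)*X j + ε*δ^j*x)) - -Real.log (1+2*ε/X j)
          = (Real.log (1+2*ε/X j) - 2*ε/X j)
            + (2*ε/X j - 2*ε/((1-ε)*X j + ε*δ^j*x)) := by ring
      rw [e2]
      refine le_trans (abs_add_le _ _) ?_
      have habs1 : |Real.log (1+2*ε/X j) - 2*ε/X j| ≤ 4*ε^2/x^2 := by
        rw [abs_le]
        constructor
        · linarith [hlog.1, hu2]
        · linarith [hlog.2, show (0:ℝ) ≤ 4*ε^2/x^2 by positivity]
      exact le_trans (add_le_add habs1 hfrac) (le_of_eq (by ring))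
    calc ∑ j ∈ range (n+1), |2*ε/(1 - δ^j*(1+x)) - Real.log (X j/(X j + 2*ε))|
        ≤ ∑ _j ∈ range (n+1), 12*ε^2/x^2 := Finset.sum_le_sum hterm
      _ = ((n:ℝ)+1) * (12*ε^2/x^2) := by
          rw [Finset.sum_const, Finset.card_range, nsmul_eq_mul]
          push_cast
          ring
      _ ≤ 12*ε/x^2 := by
          have e : ((n:ℝ)+1) * (12*ε^2/x^2) = (((n:ℝ)+1)*ε) * (12*ε) / x^2 := by ring
          rw [e]
          exact div_le_div₀ (by positivity) (by nlinarith) (by positivity) le_rfl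

theorem riemann_sum_limit_aux (x : ℝ) (hx : x ∈ Set.Ioo (0:ℝ) 1) (N : ℝ → ℕ)
    (hN : ∀ ε ∈ Set.Ioo (0:ℝ) 1,
      ((1 + ε) / (1 - ε)) ^ N ε < (2 - ε) / (1 + x * (1 - ε)) ∧
      (2 - ε) / (1 + x * (1 - ε)) ≤ ((1 + ε) / (1 - ε)) ^ (N ε + 1)) :
    Tendsto (fun ε : ℝ =>
        ∑ j ∈ Finset.range (N ε + 1), 2 * ε / (1 - ((1 + ε) / (1 - ε)) ^ j * (1 + x)))
      (nhdsWithin 0 (Set.Ioi 0)) (nhds (Real.log (2 * x / (x + 1)))) ∧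
    Tendsto (fun ε : ℝ =>
        ∏ j ∈ Finset.range (N ε + 1),
          (((1 + ε) / (1 - ε)) ^ j * (1 / (1 - ε) + x) - 1 / (1 - ε)) /
            ((((1 + ε) / (1 - ε)) ^ j * (1 / (1 - ε) + x) - 1 / (1 - ε)) + 2 * ε))
      (nhdsWithin 0 (Set.Ioi 0)) (nhds (2 * x / (x + 1))) := by
  obtain ⟨hx0, hx1⟩ := hx
  have hx1p : (0:ℝ) < 1 + x := by linarith
  have hL : (0:ℝ) < 2 * x / (x + 1) := by positivity
  obtain ⟨P, hPdef⟩ : ∃ P : ℝ → ℝ, P = fun ε : ℝ =>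
      ∏ j ∈ Finset.range (N ε + 1),
        (((1 + ε) / (1 - ε)) ^ j * (1 / (1 - ε) + x) - 1 / (1 - ε)) /
          ((((1 + ε) / (1 - ε)) ^ j * (1 / (1 - ε) + x) - 1 / (1 - ε)) + 2 * ε) := ⟨_, rfl⟩
  obtain ⟨S, hSdef⟩ : ∃ S : ℝ → ℝ, S = fun ε : ℝ =>
      ∑ j ∈ Finset.range (N ε + 1), 2 * ε / (1 - ((1 + ε) / (1 - ε)) ^ j * (1 + x)) := ⟨_, rfl⟩
  obtain ⟨T, hTdef⟩ : ∃ T : ℝ → ℝ, T = fun ε : ℝ =>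
      ((1 + ε) / (1 - ε)) ^ (N ε + 1) * x /
        (((1 + ε) / (1 - ε)) ^ (N ε + 1) * (1 / (1 - ε) + x) - 1 / (1 - ε)) := ⟨_, rfl⟩
  rw [← hPdef, ← hSdef]
  -- basic tendsto facts
  have hid : Tendsto (fun ε : ℝ => ε) (nhdsWithin 0 (Set.Ioi 0)) (nhds 0) :=
    tendsto_id.mono_left nhdsWithin_le_nhds
  have h1me : Tendsto (fun ε : ℝ => 1 - ε) (nhdsWithin 0 (Set.Ioi 0)) (nhds 1) := by
    simpa using tendsto_const_nhds.sub hid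
  have h1pe : Tendsto (fun ε : ℝ => 1 + ε) (nhdsWithin 0 (Set.Ioi 0)) (nhds 1) := by
    simpa using tendsto_const_nhds.add hid
  have hδt : Tendsto (fun ε : ℝ => (1 + ε) / (1 - ε)) (nhdsWithin 0 (Set.Ioi 0)) (nhds 1) := by
    simpa [Pi.div_def] using h1pe.div h1me one_ne_zero
  have hat : Tendsto (fun ε : ℝ => 1 / (1 - ε)) (nhdsWithin 0 (Set.Ioi 0)) (nhds 1) := by
    simpa [one_div] using h1me.inv₀ one_ne_zero
  have hg1 : Tendsto (fun ε : ℝ => (2 - ε) / (1 + x * (1 - ε)))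
      (nhdsWithin 0 (Set.Ioi 0)) (nhds (2 / (1 + x))) := by
    have hnum : Tendsto (fun ε : ℝ => 2 - ε) (nhdsWithin 0 (Set.Ioi 0)) (nhds 2) := by
      simpa using tendsto_const_nhds.sub hid
    have hden : Tendsto (fun ε : ℝ => 1 + x * (1 - ε)) (nhdsWithin 0 (Set.Ioi 0))
        (nhds (1 + x)) := by
      simpa using tendsto_const_nhds.add (tendsto_const_nhds.mul h1me)
    exact hnum.div hden (ne_of_gt hx1p)
  have hmlt : (0:ℝ) < min (1/4) (x/4) := by positivity
  have hsmall : Set.Ioo (0:ℝ) (min (1/4) (x/4)) ∈ nhdsWithin (0:ℝ) (Set.Ioi 0) :=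
    Ioo_mem_nhdsGT_of_mem ⟨le_refl 0, hmlt⟩
  have hmemIoo : ∀ ε : ℝ, ε ∈ Set.Ioo (0:ℝ) (min (1/4) (x/4)) →
      0 < ε ∧ ε ≤ 1/4 ∧ ε ≤ x/4 ∧ ε < 1 := by
    intro ε hε
    have h1 : ε < 1/4 := lt_of_lt_of_le hε.2 (min_le_left _ _)
    have h2 : ε < x/4 := lt_of_lt_of_le hε.2 (min_le_right _ _)
    exact ⟨hε.1, h1.le, h2.le, by linarith⟩
  -- D tendsto by squeeze
  have hD : Tendsto (fun ε : ℝ => ((1 + ε) / (1 - ε)) ^ (N ε + 1))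
      (nhdsWithin 0 (Set.Ioi 0)) (nhds (2 / (1 + x))) := by
    have hg2 : Tendsto (fun ε : ℝ => ((1 + ε) / (1 - ε)) * ((2 - ε) / (1 + x * (1 - ε))))
        (nhdsWithin 0 (Set.Ioi 0)) (nhds (2 / (1 + x))) := by
      simpa using hδt.mul hg1
    refine tendsto_of_tendsto_of_tendsto_of_le_of_le' hg1 hg2 ?_ ?_
    · filter_upwards [hsmall] with ε hε
      obtain ⟨he0, he1, he2, he3⟩ := hmemIoo ε hε
      exact (hN ε ⟨he0, he3⟩).2
    · filter_upwards [hsmall] with ε hε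
      obtain ⟨he0, he1, he2, he3⟩ := hmemIoo ε hε
      have hδpos : 0 < (1 + ε) / (1 - ε) := by
        apply div_pos <;> linarith
      have h1 := (hN ε ⟨he0, he3⟩).1
      rw [pow_succ]
      calc ((1 + ε) / (1 - ε)) ^ N ε * ((1 + ε) / (1 - ε))
          ≤ (2 - ε) / (1 + x * (1 - ε)) * ((1 + ε) / (1 - ε)) :=
            mul_le_mul_of_nonneg_right h1.le hδpos.le
        _ = (1 + ε) / (1 - ε) * ((2 - ε) / (1 + x * (1 - ε))) := by ring
  have hXN : Tendsto (fun ε : ℝ =>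
      ((1 + ε) / (1 - ε)) ^ (N ε + 1) * (1 / (1 - ε) + x) - 1 / (1 - ε))
      (nhdsWithin 0 (Set.Ioi 0)) (nhds 1) := by
    have h := (hD.mul (hat.add (tendsto_const_nhds (x := x)))).sub hat
    have heq : 2 / (1 + x) * (1 + x) - 1 = 1 := by
      rw [div_mul_cancel₀ _ (ne_of_gt hx1p)]
      norm_num
    rw [heq] at h
    exact h
  have hT : Tendsto T (nhdsWithin 0 (Set.Ioi 0)) (nhds (2 * x / (x + 1))) := by
    rw [hTdef]
    have h := (hD.mul (tendsto_const_nhds (x := x))).div hXN one_ne_zero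
    have heq : 2 / (1 + x) * x / 1 = 2 * x / (x + 1) := by
      rw [div_one, div_mul_eq_mul_div, mul_comm]
      congr 1
      ring
    rw [heq] at h
    exact h
  have hexp : Tendsto (fun ε : ℝ => Real.exp (4 * ε)) (nhdsWithin 0 (Set.Ioi 0)) (nhds 1) := by
    have h4 : Tendsto (fun ε : ℝ => 4 * ε) (nhdsWithin 0 (Set.Ioi 0)) (nhds 0) := by
      simpa using hid.const_mul (4:ℝ)
    have := (Real.continuous_exp.tendsto 0).comp h4
    simpa [Function.comp_def] using this
  have hU : Tendsto (fun ε : ℝ => T ε * Real.exp (4 * ε)) (nhdsWithin 0 (Set.Ioi 0))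
      (nhds (2 * x / (x + 1))) := by
    simpa using hT.mul hexp
  -- key eventual bounds
  have hkey : ∀ᶠ ε in nhdsWithin (0:ℝ) (Set.Ioi 0),
      (T ε ≤ P ε ∧ P ε ≤ T ε * Real.exp (4 * ε)) ∧
        |S ε - Real.log (P ε)| ≤ 12 * ε / x ^ 2 := by
    filter_upwards [hsmall] with ε hε
    obtain ⟨he0, he1, he2, he3⟩ := hmemIoo ε hε
    obtain ⟨k1, k2, k3⟩ := rsl_key x ε hx0 hx1 he0 he1 he2 (N ε) (hN ε ⟨he0, he3⟩).1
    rw [hPdef, hSdef, hTdef]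
    exact ⟨⟨k1, k2⟩, k3⟩
  have hprod : Tendsto P (nhdsWithin 0 (Set.Ioi 0)) (nhds (2 * x / (x + 1))) :=
    tendsto_of_tendsto_of_tendsto_of_le_of_le' hT hU
      (hkey.mono fun ε h => h.1.1) (hkey.mono fun ε h => h.1.2)
  refine ⟨?_, hprod⟩
  have hlogP : Tendsto (fun ε : ℝ => Real.log (P ε)) (nhdsWithin 0 (Set.Ioi 0))
      (nhds (Real.log (2 * x / (x + 1)))) :=
    ((Real.continuousAt_log hL.ne').tendsto).comp hprod
  have hbnd : Tendsto (fun ε : ℝ => 12 * ε / x ^ 2) (nhdsWithin 0 (Set.Ioi 0)) (nhds 0) := by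
    have := (hid.const_mul (12:ℝ)).div_const (x ^ 2)
    simpa using this
  have hdiff : Tendsto (fun ε : ℝ => S ε - Real.log (P ε)) (nhdsWithin 0 (Set.Ioi 0))
      (nhds 0) := by
    refine squeeze_zero_norm' ?_ hbnd
    filter_upwards [hkey] with ε h
    rw [Real.norm_eq_abs]
    exact h.2
  have := hdiff.add hlogP
  simpa using this

end RSLAux

/-- The Riemann-sum limit: with `δ = (1+ε)/(1-ε)`, `N = N(ε,x)` the largest integer with
`δ^N < (2-ε)/(1+x(1-ε))`, and `xⱼ = δʲ(1/(1-ε)+x) - 1/(1-ε)`, as `ε → 0⁺` the sum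
`∑_{j=0}^{N} 2ε/(1 - δʲ(1+x))` converges to
`∫₁^{2/(1+x)} dy/(y(1-y(x+1))) = log(2x/(x+1))`, and consequently
`∏_{j=0}^{N} xⱼ/(xⱼ + 2ε) → 2x/(x+1)`. -/
theorem riemann_sum_limit (x : ℝ) (hx : x ∈ Set.Ioo (0:ℝ) 1) (N : ℝ → ℕ)
    (hN : ∀ ε ∈ Set.Ioo (0:ℝ) 1,
      ((1 + ε) / (1 - ε)) ^ N ε < (2 - ε) / (1 + x * (1 - ε)) ∧
      (2 - ε) / (1 + x * (1 - ε)) ≤ ((1 + ε) / (1 - ε)) ^ (N ε + 1)) :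
    (∫ y in (1:ℝ)..(2 / (1 + x)), 1 / (y * (1 - y * (x + 1))) =
      Real.log (2 * x / (x + 1))) ∧
    Tendsto (fun ε : ℝ =>
        ∑ j ∈ Finset.range (N ε + 1), 2 * ε / (1 - ((1 + ε) / (1 - ε)) ^ j * (1 + x)))
      (nhdsWithin 0 (Set.Ioi 0)) (nhds (Real.log (2 * x / (x + 1)))) ∧
    Tendsto (fun ε : ℝ =>
        ∏ j ∈ Finset.range (N ε + 1),
          (((1 + ε) / (1 - ε)) ^ j * (1 / (1 - ε) + x) - 1 / (1 - ε)) /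
            ((((1 + ε) / (1 - ε)) ^ j * (1 / (1 - ε) + x) - 1 / (1 - ε)) + 2 * ε))
      (nhdsWithin 0 (Set.Ioi 0)) (nhds (2 * x / (x + 1))) := by
  refine ⟨rsl_integral_eval x hx.1 hx.2, ?_, ?_⟩
  · exact (riemann_sum_limit_aux x hx N hN).1
  · exact (riemann_sum_limit_aux x hx N hN).2
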